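/- If a propagator p over Val' implements its associated constraint c_p (i.e., for every assignment b : Var → Val', ⟦p({b})⟧ = {b} if b ∈ c_p and ⟦p({b})⟧ = ∅ otherwise), then the derived propagator φ̂(p) implements φ⁻(c_p): for every assignment a : Var → Val, ⟦φ̂(p)({a})⟧ = {a} if φ_Asn a ∈ c_p, and ⟦φ̂(p)({a})⟧ = ∅ otherwise. -/
import Mathlib


namespace Stmt2

variable {Var Val Val' : Type*}

/-- The assignment set of a domain. -/
def asn (d : Var → Set Val) : Set (Var → Val) := {a | ∀ x, a x ∈ d x}

/-- The singleton domain of an assignment. -/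
def single (a : Var → Val) : Var → Set Val := fun x => {a x}

/-- A view lifted to assignments. -/
def lift (φ : Var → Val → Val') (a : Var → Val) : Var → Val' := fun x => φ x (a x)

/-- A view applied to a domain (pointwise image). -/
def img (φ : Var → Val → Val') (d : Var → Set Val) : Var → Set Val' := fun x => φ x '' d x

/-- The inverse of a view applied to a domain (pointwise preimage). -/
def pre (φ : Var → Val → Val') (d : Var → Set Val') : Var → Set Val := fun x => φ x ⁻¹' d x

/-- The derived propagator `φ̂(p) = φ⁻ ∘ p ∘ φ`. -/
def derived (φ : Var → Val → Val') (p : (Var → Set Val') → Var → Set Val')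
    (d : Var → Set Val) : Var → Set Val := pre φ (p (img φ d))

/-- The associated constraint of a propagator `p`. -/
def assocCon (p : (Var → Set Val) → Var → Set Val) : Set (Var → Val) :=
  {a | asn (p (single a)) = {a}}

/-- If a propagator `p` over `Val'` implements its associated constraint `c_p`, then the derived
propagator `φ̂(p)` implements `φ⁻(c_p)`: for every assignment `a : Var → Val`,
`⟦φ̂(p)({a})⟧ = {a}` if `φ_Asn a ∈ c_p`, and `⟦φ̂(p)({a})⟧ = ∅` otherwise. -/
theorem derived_implements (φ : Var → Val → Val')
    (hφ : ∀ x, Function.Injective (φ x))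
    (p : (Var → Set Val') → Var → Set Val')
    (hcontr : ∀ d x, p d x ⊆ d x)
    (hmono : ∀ d' d : Var → Set Val', (∀ x, d' x ⊆ d x) → ∀ x, p d' x ⊆ p d x)
    (himpl : ∀ b : Var → Val',
      (b ∈ assocCon p → asn (p (single b)) = {b}) ∧
      (b ∉ assocCon p → asn (p (single b)) = (∅ : Set (Var → Val')))) :
    ∀ a : Var → Val,
      (lift φ a ∈ assocCon p → asn (derived φ p (single a)) = {a}) ∧
      (lift φ a ∉ assocCon p → asn (derived φ p (single a)) = (∅ : Set (Var → Val))) := by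
  intro a
  have himg : img φ (single a) = single (lift φ a) := by
    funext x; simp [img, single, lift, Set.image_singleton]
  have hmem : ∀ a' : Var → Val,
      a' ∈ asn (derived φ p (single a)) ↔ lift φ a' ∈ asn (p (single (lift φ a))) := by
    intro a'
    simp [asn, derived, pre, himg, lift]
  constructor
  · intro h
    have hb := (himpl (lift φ a)).1 h
    ext a'
    rw [Set.mem_singleton_iff]
    constructor
    · intro ha'
      have := (hmem a').1 ha'
      rw [hb, Set.mem_singleton_iff] at this
      funext x
      exact hφ x (congrFun this x)
    · rintro rfl
      exact (hmem _).2 (by rw [hb]; rfl)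
  · intro h
    have hb := (himpl (lift φ a)).2 h
    ext a'
    simp only [Set.mem_empty_iff_false, iff_false]
    intro ha'
    have := (hmem a').1 ha'
    rw [hb] at this
    exact this

end Stmt2
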